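/- Assume X ≠ 0 and the equation A = X Z has at least one solution Z (i.e., A lies in the column space of X). Then Z* = X† A is the unique minimizer of the nuclear norm ‖Z‖_* over all Z satisfying A = X Z. -/

import Mathlib

open Matrix

/-- The nuclear norm of a real matrix: the sum of its singular values,
i.e. the sum of the square roots of the eigenvalues of `Aᵀ * A`. -/
noncomputable def nuclearNorm {m n : Type*} [Fintype m] [Fintype n] [DecidableEq n]
    (A : Matrix m n ℝ) : ℝ :=
  ∑ i, Real.sqrt ((show (Aᵀ * A).IsHermitian by
    rw [IsHermitian, conjTranspose_eq_transpose_of_trivial, transpose_mul, transpose_transpose]).eigenvalues i)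

/-- `P` is the Moore–Penrose pseudo-inverse of `X`. -/
def IsMoorePenroseInv {m n : Type*} [Fintype m] [Fintype n]
    (X : Matrix m n ℝ) (P : Matrix n m ℝ) : Prop :=
  X * P * X = X ∧ P * X * P = P ∧ (X * P)ᵀ = X * P ∧ (P * X)ᵀ = P * X

/-- `(U, σ, V)` is a skinny SVD of `X`: `U` and `V` have orthonormal columns,
`σ` lists the (positive) nonzero singular values, `X = U * diagonal σ * Vᵀ`,
and the number of columns of `U` and `V` is `rank X`. -/
def IsSkinnySVD {m n r : ℕ} (X : Matrix (Fin m) (Fin n) ℝ)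
    (U : Matrix (Fin m) (Fin r) ℝ) (σ : Fin r → ℝ) (V : Matrix (Fin n) (Fin r) ℝ) : Prop :=
  Uᵀ * U = 1 ∧ Vᵀ * V = 1 ∧ (∀ i, 0 < σ i) ∧
    X = U * Matrix.diagonal σ * Vᵀ ∧ r = X.rank


section helpers
variable {k : Type*} [Fintype k] [DecidableEq k]

noncomputable def Matrix.PosSemidef.sqrt {M : Matrix k k ℝ} (hM : M.PosSemidef) : Matrix k k ℝ :=
  hM.1.eigenvectorUnitary.1 * diagonal (fun i => Real.sqrt (hM.1.eigenvalues i)) *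
    (star hM.1.eigenvectorUnitary.1 : Matrix k k ℝ)

lemma Matrix.PosSemidef.posSemidef_sqrt {M : Matrix k k ℝ} (hM : M.PosSemidef) :
    hM.sqrt.PosSemidef :=
  PosSemidef.mul_mul_conjTranspose_same
    (posSemidef_diagonal_iff.mpr fun _ => Real.sqrt_nonneg _) _

lemma Matrix.PosSemidef.sqrt_mul_self {M : Matrix k k ℝ} (hM : M.PosSemidef) :
    hM.sqrt * hM.sqrt = M := by
  have h1 : (star hM.1.eigenvectorUnitary.1 : Matrix k k ℝ) * hM.1.eigenvectorUnitary.1 = 1 :=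
    Unitary.coe_star_mul_self hM.1.eigenvectorUnitary
  simp only [Matrix.PosSemidef.sqrt]
  rw [show ∀ a b c d e f : Matrix k k ℝ, a * b * c * (d * e * f) = a * (b * (c * d) * e) * f by
    intros; simp only [mul_assoc], h1, mul_one, diagonal_mul_diagonal]
  conv_rhs => rw [hM.1.spectral_theorem, Unitary.conjStarAlgAut_apply]
  congr 2
  ext i j
  by_cases h : i = j
  · subst h
    simp [Real.mul_self_sqrt (hM.eigenvalues_nonneg i)]
  · simp [diagonal_apply_ne _ h]

lemma trps {M : Matrix k k ℝ} (hM : M.PosSemidef) : 0 ≤ M.trace := by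
  rw [Matrix.trace]
  exact Finset.sum_nonneg fun i _ => by simpa [Matrix.diag] using hM.diag_nonneg (i := i)

lemma trace_mul_psd {A B : Matrix k k ℝ} (hA : A.PosSemidef) (hB : B.PosSemidef) :
    0 ≤ (A * B).trace := by
  obtain ⟨F, rfl⟩ : ∃ F : Matrix k k ℝ, B = Fᴴ * F :=
    ⟨hB.sqrt, by rw [hB.posSemidef_sqrt.1.eq, hB.sqrt_mul_self]⟩
  rw [← mul_assoc, Matrix.trace_mul_cycle]
  exact trps (hA.mul_mul_conjTranspose_same F)

lemma psd_smul {M : Matrix k k ℝ} (hM : M.PosSemidef) {a : ℝ} (ha : 0 ≤ a) :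
    (a • M).PosSemidef := by
  constructor
  · rw [IsHermitian, conjTranspose_smul, star_trivial, hM.1.eq]
  · intro x
    exact (hM.smul ha).2 x

omit [Fintype k] in
lemma smul_one_diagonal (a : ℝ) :
    a • (1 : Matrix k k ℝ) = diagonal (fun _ => a) := by
  ext i j
  by_cases h : i = j <;> simp [Matrix.one_apply, h]

lemma psd_smul_one {a : ℝ} (ha : 0 ≤ a) : (a • (1 : Matrix k k ℝ)).PosSemidef :=
  psd_smul Matrix.PosSemidef.one ha

lemma trace_eq (B : Matrix k k ℝ) (hB : B.IsHermitian) : B.trace = ∑ i, hB.eigenvalues i := by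
  conv_lhs => rw [hB.spectral_theorem, Unitary.conjStarAlgAut_apply]
  rw [Matrix.trace_mul_cycle]
  have h1 : (star hB.eigenvectorUnitary.1 : Matrix k k ℝ) * hB.eigenvectorUnitary.1 = 1 :=
    Unitary.coe_star_mul_self hB.eigenvectorUnitary
  rw [h1, one_mul, Matrix.trace_diagonal]
  simp

lemma smul_one_sub_psd {S : Matrix k k ℝ} (hS : S.PosSemidef) {t : ℝ} (ht : S.trace ≤ t) :
    (t • (1 : Matrix k k ℝ) - S).PosSemidef := by
  have key : t • (1 : Matrix k k ℝ) - S =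
      hS.1.eigenvectorUnitary.1 * diagonal (fun i => t - hS.1.eigenvalues i) *
        (star hS.1.eigenvectorUnitary.1 : Matrix k k ℝ) := by
    have h1 : hS.1.eigenvectorUnitary.1 * (star hS.1.eigenvectorUnitary.1 : Matrix k k ℝ) = 1 :=
      Unitary.coe_mul_star_self hS.1.eigenvectorUnitary
    have h2 : (diagonal (fun i => t - hS.1.eigenvalues i) : Matrix k k ℝ)
        = t • 1 - diagonal (RCLike.ofReal ∘ hS.1.eigenvalues) := by
      rw [← diagonal_one, ← diagonal_smul, ← diagonal_sub]
      congr 1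
      ext i j
      by_cases h : i = j <;> simp [Matrix.one_apply, h]
    rw [h2, mul_sub, sub_mul, mul_smul_comm, smul_mul_assoc, mul_one, h1,
      ← Unitary.conjStarAlgAut_apply (S := ℝ), ← hS.1.spectral_theorem]
  rw [key]
  refine Matrix.PosSemidef.mul_mul_conjTranspose_same ?_ _
  refine posSemidef_diagonal_iff.mpr fun i => ?_
  have h3 : hS.1.eigenvalues i ≤ ∑ j, hS.1.eigenvalues j :=
    Finset.single_le_sum (f := fun j => hS.1.eigenvalues j)
      (fun j _ => hS.eigenvalues_nonneg j) (Finset.mem_univ i)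
  have := trace_eq S hS.1
  linarith

lemma amgm {S T : Matrix k k ℝ} (hS : S.PosSemidef) (hT : T.PosDef) :
    2 * S.trace ≤ (T⁻¹ * (S * S)).trace + T.trace := by
  have hdet : IsUnit T.det := isUnit_iff_ne_zero.mpr hT.det_pos.ne'
  have hTiT : T⁻¹ * T = 1 := nonsing_inv_mul T hdet
  have hTTi : T * T⁻¹ = 1 := mul_nonsing_inv T hdet
  have hTi : (T⁻¹).PosSemidef := hT.posSemidef.inv
  have hST : (S - T).IsHermitian := hS.1.sub hT.isHermitian
  have hsq : ((S - T) * (S - T)).PosSemidef := by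
    have := posSemidef_conjTranspose_mul_self (S - T)
    rwa [hST.eq] at this
  have h0 : 0 ≤ (T⁻¹ * ((S - T) * (S - T))).trace := trace_mul_psd hTi hsq
  have expand : (S - T) * (S - T) = S * S - S * T - T * S + T * T := by noncomm_ring
  rw [expand] at h0
  have e1 : T⁻¹ * (S * S - S * T - T * S + T * T)
      = T⁻¹ * (S * S) - T⁻¹ * S * T - S + T := by
    rw [mul_add, mul_sub, mul_sub, ← mul_assoc, ← mul_assoc, ← mul_assoc, hTiT, one_mul,
      mul_assoc, ← mul_assoc T⁻¹ T T, hTiT, one_mul]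
  rw [e1, Matrix.trace_add, Matrix.trace_sub, Matrix.trace_sub] at h0
  have e2 : (T⁻¹ * S * T).trace = S.trace := by
    rw [Matrix.trace_mul_cycle, hTTi, one_mul]
  rw [e2] at h0
  linarith

lemma key' {C D B : Matrix k k ℝ} (hD : D.PosSemidef) (hBdef : B = C + D)
    {Sc S : Matrix k k ℝ} (hScp : Sc.PosSemidef) (hSp : S.PosSemidef)
    (hScSc : Sc * Sc = C) (hSS : S * S = B) (hDtr : 0 < D.trace) :
    Sc.trace < S.trace := by
  have hne : Nonempty k := by
    by_contra h
    rw [not_nonempty_iff] at h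
    rw [Matrix.trace, Finset.univ_eq_empty, Finset.sum_empty] at hDtr
    exact lt_irrefl 0 hDtr
  set N : ℝ := (Fintype.card k : ℝ) with hNdef
  have hN : 0 < N := Nat.cast_pos.mpr (Fintype.card_pos_iff.mpr hne)
  set c : ℝ := S.trace + 1 with hcdef
  have hc : 0 < c := by have := trps hSp; linarith
  set ε : ℝ := min 1 (D.trace / (2 * N * c)) with hεdef
  have hε0 : 0 < ε := lt_min one_pos (div_pos hDtr (by positivity))
  have hε1 : ε ≤ 1 := min_le_left _ _
  have hε2 : ε ≤ D.trace / (2 * N * c) := min_le_right _ _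
  obtain ⟨T, hTdef⟩ : ∃ T : Matrix k k ℝ, T = S + ε • 1 := ⟨_, rfl⟩
  have hεone : (ε • (1 : Matrix k k ℝ)).PosDef := by
    rw [smul_one_diagonal]
    exact posDef_diagonal_iff.mpr fun _ => hε0
  have hT : T.PosDef := hTdef ▸ hεone.posSemidef_add hSp
  have hdet : IsUnit T.det := isUnit_iff_ne_zero.mpr hT.det_pos.ne'
  have hTiT : T⁻¹ * T = 1 := nonsing_inv_mul T hdet
  have hTTi : T * T⁻¹ = 1 := mul_nonsing_inv T hdet
  have hTipd : T⁻¹.PosDef := hT.inv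
  obtain ⟨Ri, hRip, hRR⟩ : ∃ R : Matrix k k ℝ, R.PosSemidef ∧ R * R = T⁻¹ :=
    ⟨hTipd.posSemidef.sqrt, hTipd.posSemidef.posSemidef_sqrt, hTipd.posSemidef.sqrt_mul_self⟩
  have hdetRi : IsUnit Ri.det := by
    have h1 : Ri.det * Ri.det = T⁻¹.det := by rw [← det_mul, hRR]
    have h2 : 0 < T⁻¹.det := hTipd.det_pos
    refine isUnit_iff_ne_zero.mpr fun h => ?_
    rw [h, mul_zero] at h1
    linarith [h1 ▸ h2]
  have hRiRi : Ri * Ri⁻¹ = 1 := mul_nonsing_inv Ri hdetRi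
  have hRiRi' : Ri⁻¹ * Ri = 1 := nonsing_inv_mul Ri hdetRi
  have hRTR : Ri * T * Ri = 1 := by
    have h1 : T = Ri⁻¹ * Ri⁻¹ := by
      rw [← nonsing_inv_nonsing_inv T hdet, ← hRR, Matrix.mul_inv_rev]
    rw [h1, ← mul_assoc Ri Ri⁻¹ Ri⁻¹, hRiRi, one_mul, hRiRi']
  have claim4 : T⁻¹.trace ≤ ε⁻¹ * N := by
    have he : ε⁻¹ • (1:Matrix k k ℝ) - T⁻¹ = Ri * (ε⁻¹ • T - 1) * Ri := by
      rw [mul_sub, sub_mul, mul_smul_comm, smul_mul_assoc, hRTR, mul_one, hRR]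
    have hpsd : (ε⁻¹ • T - 1 : Matrix k k ℝ).PosSemidef := by
      have h2 : (ε⁻¹ • T - 1 : Matrix k k ℝ) = ε⁻¹ • S := by
        rw [hTdef, smul_add, smul_smul, inv_mul_cancel₀ hε0.ne', one_smul]
        abel
      rw [h2]
      exact psd_smul hSp (by positivity)
    have hpsd2 : (ε⁻¹ • (1:Matrix k k ℝ) - T⁻¹).PosSemidef := by
      have h9 := hpsd.mul_mul_conjTranspose_same Ri
      rw [hRip.1.eq] at h9
      rw [he]
      exact h9
    have := trps hpsd2
    rw [Matrix.trace_sub, Matrix.trace_smul, Matrix.trace_one] at this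
    simp only [smul_eq_mul] at this
    linarith
  have claim6 : c⁻¹ * D.trace ≤ (T⁻¹ * D).trace := by
    have he : T⁻¹ - c⁻¹ • (1:Matrix k k ℝ) = Ri * (1 - c⁻¹ • T) * Ri := by
      rw [mul_sub, sub_mul, mul_smul_comm, smul_mul_assoc, hRTR, mul_one, hRR]
    have hpsd : ((1:Matrix k k ℝ) - c⁻¹ • T).PosSemidef := by
      have h1 : ((1:Matrix k k ℝ) - c⁻¹ • T) = c⁻¹ • (c • 1 - T) := by
        rw [smul_sub, smul_smul, inv_mul_cancel₀ hc.ne', one_smul]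
      have h2 : (c • (1:Matrix k k ℝ) - T) = (S.trace • 1 - S) + (1 - ε) • 1 := by
        rw [hcdef, hTdef, add_smul, sub_smul, one_smul]
        abel
      rw [h1, h2]
      exact psd_smul ((smul_one_sub_psd hSp le_rfl).add (psd_smul_one (by linarith)))
        (by positivity)
    have hpsd2 : (T⁻¹ - c⁻¹ • (1:Matrix k k ℝ)).PosSemidef := by
      have h9 := hpsd.mul_mul_conjTranspose_same Ri
      rw [hRip.1.eq] at h9
      rw [he]
      exact h9
    have h3 := trace_mul_psd hpsd2 hD
    rw [sub_mul, smul_mul_assoc, one_mul, Matrix.trace_sub, Matrix.trace_smul] at h3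
    simp only [smul_eq_mul] at h3
    linarith
  have hamgm : 2 * Sc.trace ≤ (T⁻¹ * C).trace + T.trace := by
    have := amgm hScp hT
    rwa [hScSc] at this
  have htrT : T.trace = S.trace + ε * N := by
    rw [hTdef, Matrix.trace_add, Matrix.trace_smul, Matrix.trace_one]
    simp [hNdef]
  have hTB : (T⁻¹ * B).trace = S.trace - ε * N + ε * ε * T⁻¹.trace := by
    have hSe : S = T - ε • 1 := by rw [hTdef]; abel
    have hexp : B = T * T - (2 * ε) • T + (ε * ε) • 1 := by
      rw [← hSS, hSe]
      simp only [sub_mul, mul_sub, mul_smul_comm, smul_mul_assoc, mul_one, one_mul]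
      module
    have h5 : T⁻¹ * B = T - (2 * ε) • 1 + (ε * ε) • T⁻¹ := by
      rw [hexp, mul_add, mul_sub, ← mul_assoc, hTiT, one_mul, mul_smul_comm, mul_smul_comm,
        hTiT, mul_one]
    rw [h5, Matrix.trace_add, Matrix.trace_sub, Matrix.trace_smul, Matrix.trace_smul,
      Matrix.trace_one, htrT]
    simp only [smul_eq_mul]
    ring
  have hTC : (T⁻¹ * C).trace = (T⁻¹ * B).trace - (T⁻¹ * D).trace := by
    have h6 : T⁻¹ * C = T⁻¹ * B - T⁻¹ * D := by rw [hBdef, mul_add]; abel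
    rw [h6, Matrix.trace_sub]
  have h4 : ε * ε * T⁻¹.trace ≤ ε * N := by
    have h5 : 0 ≤ T⁻¹.trace := trps hTipd.posSemidef
    calc ε * ε * T⁻¹.trace = ε * (ε * T⁻¹.trace) := by ring
    _ ≤ ε * (ε * (ε⁻¹ * N)) := by
        apply mul_le_mul_of_nonneg_left _ hε0.le
        exact mul_le_mul_of_nonneg_left claim4 hε0.le
    _ = ε * N := by field_simp
  have h6 : ε * N ≤ D.trace / (2 * c) := by
    rw [le_div_iff₀ (by positivity)]
    have h7 : ε * (2 * N * c) ≤ D.trace := by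
      rw [le_div_iff₀ (by positivity)] at hε2
      exact hε2
    calc ε * N * (2 * c) = ε * (2 * N * c) := by ring
    _ ≤ D.trace := h7
  have h7 : D.trace / (2 * c) < c⁻¹ * D.trace := by
    rw [div_lt_iff₀ (by positivity)]
    have h8 : c⁻¹ * D.trace * (2 * c) = 2 * D.trace := by field_simp
    rw [h8]
    linarith
  have hfin := hTC ▸ hamgm
  linarith


lemma trace_sqrt {B : Matrix k k ℝ} (hB : B.PosSemidef) :
    hB.sqrt.trace = ∑ i, Real.sqrt (hB.1.eigenvalues i) := by
  rw [Matrix.PosSemidef.sqrt, Matrix.trace_mul_cycle]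
  have h1 : (star hB.1.eigenvectorUnitary.1 : Matrix k k ℝ) * hB.1.eigenvectorUnitary.1 = 1 :=
    Unitary.coe_star_mul_self hB.1.eigenvectorUnitary
  rw [h1, one_mul, Matrix.trace_diagonal]

lemma split_lemma (Q Z : Matrix k k ℝ) (hq : Q * (Q * Z) = Q * Z) (hqt : Qᴴ = Q) :
    Zᴴ * Z = (Q * Z)ᴴ * (Q * Z) + (Z - Q * Z)ᴴ * (Z - Q * Z) := by
  simp only [conjTranspose_sub, conjTranspose_mul, hqt, sub_mul, mul_sub, mul_assoc, hq]
  abel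

lemma trace_pos_of_ne_zero {p : Type*} [Fintype p] (W : Matrix p k ℝ) (hW : W ≠ 0) :
    0 < (Wᴴ * W).trace := by
  have htr : (Wᴴ * W).trace = ∑ j, ∑ i, (W i j) ^ 2 := by
    simp [Matrix.trace, Matrix.diag, mul_apply, conjTranspose_apply, sq]
  obtain ⟨i, j, hij⟩ : ∃ i j, W i j ≠ 0 := by
    by_contra h
    push_neg at h
    exact hW (by ext i j; simpa using h i j)
  rw [htr]
  refine Finset.sum_pos' (fun a _ => Finset.sum_nonneg fun b _ => sq_nonneg _) ⟨j, Finset.mem_univ j, ?_⟩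
  refine Finset.sum_pos' (fun b _ => sq_nonneg _) ⟨i, Finset.mem_univ i, ?_⟩
  positivity

lemma nuclearNorm_eq_trace_sqrt {p : Type*} [Fintype p] (M : Matrix p k ℝ) :
    nuclearNorm M = (posSemidef_conjTranspose_mul_self M).sqrt.trace := by
  rw [nuclearNorm, trace_sqrt]
  rfl

end helpers

/-- If `A = X Z` is feasible, then `Z* = X† A` is the unique minimizer of the
nuclear norm over all feasible `Z`. -/
theorem stmt7 {m n : ℕ} (X A : Matrix (Fin m) (Fin n) ℝ) (hX : X ≠ 0)
    (P : Matrix (Fin n) (Fin m) ℝ) (hP : IsMoorePenroseInv X P)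
    (hfeas : ∃ Z : Matrix (Fin n) (Fin n) ℝ, A = X * Z) :
    A = X * (P * A) ∧
    ∀ Z : Matrix (Fin n) (Fin n) ℝ, A = X * Z → Z ≠ P * A →
      nuclearNorm (P * A) < nuclearNorm Z := by
  obtain ⟨Z₀, hZ₀⟩ := hfeas
  obtain ⟨h1, h2, h3, h4⟩ := hP
  have h4' : (P * X)ᴴ = P * X := by
    rw [conjTranspose_eq_transpose_of_trivial]
    exact h4
  have hfix : A = X * (P * A) := by
    rw [hZ₀, ← Matrix.mul_assoc, ← Matrix.mul_assoc, h1]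
  refine ⟨hfix, fun Z hZ hne => ?_⟩
  have hq : (P * X) * ((P * X) * Z) = (P * X) * Z := by
    simp only [← Matrix.mul_assoc]
    rw [h2]
  have hPA : P * A = (P * X) * Z := by rw [hZ, ← Matrix.mul_assoc]
  have hW : Z - P * A ≠ 0 := sub_ne_zero.mpr (fun h => hne (by rw [h]))
  have hsplit : Zᴴ * Z = (P * A)ᴴ * (P * A) + (Z - P * A)ᴴ * (Z - P * A) := by
    rw [hPA]
    exact split_lemma (P * X) Z hq h4'
  rw [nuclearNorm_eq_trace_sqrt, nuclearNorm_eq_trace_sqrt]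
  exact key' (posSemidef_conjTranspose_mul_self (Z - P * A)) hsplit
    (posSemidef_conjTranspose_mul_self (P * A)).posSemidef_sqrt
    (posSemidef_conjTranspose_mul_self Z).posSemidef_sqrt
    (posSemidef_conjTranspose_mul_self (P * A)).sqrt_mul_self
    (posSemidef_conjTranspose_mul_self Z).sqrt_mul_self
    (trace_pos_of_ne_zero _ hW)
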